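/- arXiv:1905.05457 — 5 statements merged into one kernel-verified Lean document; each statement's English description precedes it below -/
import Mathlib

section
/- Let F : Y → Y be a map with a countable Markov partition {Y_i} such that on each n-cylinder there is uniform expansion d(F^n x, F^n y) ≥ C_e σ^n d(x,y) with σ > 1, and let Φ be a potential with |e^{S_nΦ(x) - S_nΦ(y)} - 1| ≤ C_d d(F^n x, F^n y)^η on n-cylinders, and let m be a Φ-conformal measure with images F^n(Y_i^{(n)}) of measure at least q > 0. Then for every n and every point x of an n-cylinder Y_i^{(n)}, e^{S_nΦ(x)} ≤ ((1+C_d)/q) m(Y_i^{(n)}). -/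
open MeasureTheory

theorem conformal_cylinder_bound {Y : Type*} [MetricSpace Y] [MeasurableSpace Y]
    (F : Y → Y) (Φ : Y → ℝ) (m : Measure Y) [IsFiniteMeasure m]
    (n : ℕ) (Z : Set Y) (hZ : MeasurableSet Z)
    (η Ce Cd σ q : ℝ)
    (hη0 : 0 < η) (hη1 : η ≤ 1) (hCe : 0 < Ce) (hσ : 1 < σ) (hCd : 0 ≤ Cd) (hq : 0 < q)
    (hexp : ∀ x ∈ Z, ∀ y ∈ Z, Ce * σ ^ n * dist x y ≤ dist (F^[n] x) (F^[n] y))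
    (hdist : ∀ x ∈ Z, ∀ y ∈ Z,
      |Real.exp ((∑ i ∈ Finset.range n, Φ (F^[i] x)) -
          (∑ i ∈ Finset.range n, Φ (F^[i] y))) - 1| ≤
        Cd * dist (F^[n] x) (F^[n] y) ^ η)
    (hdiam : ∀ x ∈ Z, ∀ y ∈ Z, dist (F^[n] x) (F^[n] y) ≤ 1)
    (hconf : (m (F^[n] '' Z)).toReal =
      ∫ x in Z, Real.exp (-(∑ i ∈ Finset.range n, Φ (F^[i] x))) ∂m)
    (himg : q ≤ (m (F^[n] '' Z)).toReal) :
    ∀ x ∈ Z, Real.exp (∑ i ∈ Finset.range n, Φ (F^[i] x)) ≤ (1 + Cd) / q * (m Z).toReal := by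
  intro x hx
  set S : Y → ℝ := fun y => ∑ i ∈ Finset.range n, Φ (F^[i] y) with hS
  have key : ∀ y ∈ Z, Real.exp (-(S y)) ≤ (1 + Cd) * Real.exp (-(S x)) := by
    intro y hy
    have hd := hdist x hx y hy
    have hd1 : dist (F^[n] x) (F^[n] y) ^ η ≤ 1 :=
      Real.rpow_le_one dist_nonneg (hdiam x hx y hy) hη0.le
    have h1 : Real.exp (S x - S y) ≤ 1 + Cd := by
      have h2 := (abs_le.mp hd).2
      nlinarith [mul_le_mul_of_nonneg_left hd1 hCd]
    have heq : Real.exp (-(S y)) = Real.exp (S x - S y) * Real.exp (-(S x)) := by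
      rw [← Real.exp_add]; ring_nf
    rw [heq]
    exact mul_le_mul_of_nonneg_right h1 (Real.exp_pos _).le
  have hpos : 0 < ∫ y in Z, Real.exp (-(S y)) ∂m := lt_of_lt_of_le hq (himg.trans_eq hconf)
  have hint : IntegrableOn (fun y => Real.exp (-(S y))) Z m := by
    by_contra h
    rw [IntegrableOn] at h
    rw [integral_undef h] at hpos
    exact lt_irrefl 0 hpos
  have hle : ∫ y in Z, Real.exp (-(S y)) ∂m ≤ (1 + Cd) * Real.exp (-(S x)) * (m Z).toReal := by
    calc ∫ y in Z, Real.exp (-(S y)) ∂m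
        ≤ ∫ _ in Z, (1 + Cd) * Real.exp (-(S x)) ∂m :=
          setIntegral_mono_on hint (integrableOn_const (measure_lt_top m Z).ne) hZ key
      _ = (1 + Cd) * Real.exp (-(S x)) * (m Z).toReal := by
          rw [setIntegral_const, smul_eq_mul, Measure.real]; ring
  have hq' : q ≤ (1 + Cd) * Real.exp (-(S x)) * (m Z).toReal :=
    le_trans (himg.trans_eq hconf) hle
  rw [div_mul_eq_mul_div, le_div_iff₀ hq]
  show Real.exp (S x) * q ≤ (1 + Cd) * (m Z).toReal
  have hmul := mul_le_mul_of_nonneg_left hq' (Real.exp_pos (S x)).le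
  have hinv : Real.exp (S x) * Real.exp (-(S x)) = 1 := by
    rw [← Real.exp_add]; simp
  rw [show Real.exp (S x) * ((1 + Cd) * Real.exp (-(S x)) * (m Z).toReal) =
      Real.exp (S x) * Real.exp (-(S x)) * ((1 + Cd) * (m Z).toReal) from by ring,
    hinv, one_mul] at hmul
  exact hmul
end

section
/- Let (f, X, μ) be an ergodic measure-preserving system, and for ε > 0 let H_ε = (z-ε, z+ε) with μ(H_ε) > 0 for all ε > 0. Define the survivor set S_ε = ∩_{n≥0} f^{-n}(X \ H_ε). If f is continuous and S_ε ∩ ∂H_ε = ∅ for some ε, then there exists δ > 0 such that S_{ε'} = S_ε for all ε' ∈ (ε-δ, ε+δ). -/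
open MeasureTheory

def survivorSet (f : ℝ → ℝ) (X : Set ℝ) (z ε : ℝ) : Set ℝ :=
  {x ∈ X | ∀ n : ℕ, f^[n] x ∉ Set.Ioo (z - ε) (z + ε)}

namespace SurvivorAux

lemma mono {f : ℝ → ℝ} {X : Set ℝ} {z ε₁ ε₂ : ℝ} (h : ε₁ ≤ ε₂) :
    survivorSet f X z ε₂ ⊆ survivorSet f X z ε₁ := by
  intro x hx
  refine ⟨hx.1, fun n hn => hx.2 n ?_⟩
  exact Set.Ioo_subset_Ioo (by linarith) (by linarith) hn

lemma fwd {a b z : ℝ} {f : ℝ → ℝ}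
    (hmaps : Set.MapsTo f (Set.Icc a b) (Set.Icc a b)) {ε x : ℝ}
    (hx : x ∈ survivorSet f (Set.Icc a b) z ε) (n : ℕ) :
    f^[n] x ∈ survivorSet f (Set.Icc a b) z ε := by
  refine ⟨(hmaps.iterate n) hx.1, fun m hm => hx.2 (m + n) ?_⟩
  rwa [Function.iterate_add_apply]

lemma isClosedS {a b z : ℝ} {f : ℝ → ℝ} (hf : Continuous f) (ε : ℝ) :
    IsClosed (survivorSet f (Set.Icc a b) z ε) := by
  have heq : survivorSet f (Set.Icc a b) z ε
      = Set.Icc a b ∩ ⋂ n : ℕ, (f^[n]) ⁻¹' (Set.Ioo (z - ε) (z + ε))ᶜ := by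
    ext x
    simp [survivorSet, Set.mem_iInter]
  rw [heq]
  exact isClosed_Icc.inter (isClosed_iInter fun n =>
    (isOpen_Ioo.isClosed_compl).preimage (hf.iterate n))

lemma isCompactS {a b z : ℝ} {f : ℝ → ℝ} (hf : Continuous f) (ε : ℝ) :
    IsCompact (survivorSet f (Set.Icc a b) z ε) :=
  isCompact_Icc.of_isClosed_subset (isClosedS hf ε) (fun _ hx => hx.1)

lemma lemA {a b z : ℝ} {f : ℝ → ℝ} (hf : Continuous f)
    (hmaps : Set.MapsTo f (Set.Icc a b) (Set.Icc a b)) {ε : ℝ} (hε : 0 < ε)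
    (hbd : survivorSet f (Set.Icc a b) z ε ∩ {z - ε, z + ε} = ∅) :
    ∃ δ > 0, ∀ x ∈ survivorSet f (Set.Icc a b) z ε, ∀ n : ℕ,
      ε + δ ≤ |f^[n] x - z| := by
  set K := survivorSet f (Set.Icc a b) z ε with hK
  by_cases hne : K.Nonempty
  · obtain ⟨x₀, hx₀K, hmin⟩ := (isCompactS hf ε).exists_isMinOn hne
      ((continuous_id.sub continuous_const).abs.continuousOn :
        ContinuousOn (fun x => |x - z|) K)
    have h0 : x₀ ∉ Set.Ioo (z - ε) (z + ε) := by
      have := hx₀K.2 0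
      simpa using this
    have hne1 : x₀ ≠ z - ε := by
      intro h
      have : x₀ ∈ K ∩ ({z - ε, z + ε} : Set ℝ) := ⟨hx₀K, by simp [h]⟩
      rw [hbd] at this
      exact this
    have hne2 : x₀ ≠ z + ε := by
      intro h
      have : x₀ ∈ K ∩ ({z - ε, z + ε} : Set ℝ) := ⟨hx₀K, by simp [h]⟩
      rw [hbd] at this
      exact this
    have hgt : ε < |x₀ - z| := by
      rcases le_or_gt x₀ (z - ε) with h1 | h1
      · have h1' : x₀ < z - ε := lt_of_le_of_ne h1 hne1
        rw [abs_sub_comm, abs_of_pos (by linarith)]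
        linarith
      · have h2 : z + ε ≤ x₀ := by
          by_contra h2
          exact h0 ⟨h1, lt_of_not_ge h2⟩
        have h2' : z + ε < x₀ := lt_of_le_of_ne h2 (Ne.symm hne2)
        rw [abs_of_pos (by linarith)]
        linarith
    refine ⟨|x₀ - z| - ε, by linarith, fun x hx n => ?_⟩
    have hxn : f^[n] x ∈ K := fwd hmaps hx n
    have := hmin hxn
    simp only [Set.mem_setOf_eq] at this
    calc ε + (|x₀ - z| - ε) = |x₀ - z| := by ring
    _ ≤ |f^[n] x - z| := this
  · exact ⟨1, one_pos, fun x hx => absurd ⟨x, hx⟩ hne⟩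

lemma lemB {a b z : ℝ} {f : ℝ → ℝ} (hf : Continuous f)
    (hmaps : Set.MapsTo f (Set.Icc a b) (Set.Icc a b)) {ε : ℝ} (hε : 0 < ε)
    (hbd : survivorSet f (Set.Icc a b) z ε ∩ {z - ε, z + ε} = ∅) :
    ∃ δ > 0, ∀ ε', ε - δ < ε' → ε' ≤ ε →
      survivorSet f (Set.Icc a b) z ε' ⊆ survivorSet f (Set.Icc a b) z ε := by
  by_contra hcon
  push_neg at hcon
  -- For each k, we find a point in the annulus
  set F : ℕ → Set ℝ := fun k =>
    survivorSet f (Set.Icc a b) z (ε - 1 / (k + 1)) ∩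
      {y | ε - 1 / (k + 1) ≤ |y - z| ∧ |y - z| ≤ ε} with hF
  have hFclosed : ∀ k, IsClosed (F k) := by
    intro k
    refine (isClosedS hf _).inter ?_
    have : {y : ℝ | ε - 1 / (k + 1) ≤ |y - z| ∧ |y - z| ≤ ε}
        = (fun y => |y - z|) ⁻¹' (Set.Icc (ε - 1 / (k + 1)) ε) := rfl
    rw [this]
    exact isClosed_Icc.preimage (continuous_id.sub continuous_const).abs
  have hFsub : ∀ k, F (k + 1) ⊆ F k := by
    intro k y hy
    have hk : (1 : ℝ) / ((k : ℝ) + 1 + 1) ≤ 1 / ((k : ℝ) + 1) := by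
      apply one_div_le_one_div_of_le (by positivity) (by linarith)
    refine ⟨mono (by push_cast; linarith) hy.1, ?_, hy.2.2⟩
    have := hy.2.1
    push_cast at this ⊢
    linarith
  have hFne : ∀ k, (F k).Nonempty := by
    intro k
    have hkpos : (0 : ℝ) < 1 / (k + 1) := by positivity
    obtain ⟨ε', hε'1, hε'2, hnsub⟩ := hcon (1 / (k + 1)) hkpos
    rw [Set.not_subset] at hnsub
    obtain ⟨x, hxS, hxN⟩ := hnsub
    -- x ∈ S ε', x ∉ S ε, so some iterate lands in the big hole
    have hxIcc : x ∈ Set.Icc a b := hxS.1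
    have : ∃ n : ℕ, f^[n] x ∈ Set.Ioo (z - ε) (z + ε) := by
      by_contra h
      push_neg at h
      exact hxN ⟨hxIcc, h⟩
    obtain ⟨n, hn⟩ := this
    set y := f^[n] x with hy
    have hyS : y ∈ survivorSet f (Set.Icc a b) z ε' := fwd hmaps hxS n
    have hy0 : y ∉ Set.Ioo (z - ε') (z + ε') := by
      have := hyS.2 0
      simpa using this
    have habs : ε' ≤ |y - z| := by
      rcases le_or_gt y (z - ε') with h1 | h1
      · rw [abs_sub_comm]
        calc ε' ≤ z - y := by linarith
        _ ≤ |z - y| := le_abs_self _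
      · have h2 : z + ε' ≤ y := by
          by_contra h2
          exact hy0 ⟨h1, lt_of_not_ge h2⟩
        calc ε' ≤ y - z := by linarith
        _ ≤ |y - z| := le_abs_self _
    have habs2 : |y - z| < ε := by
      rw [abs_lt]
      constructor <;> [skip; skip] <;>
        · have h1 := hn.1; have h2 := hn.2; linarith
    exact ⟨y, mono (by linarith) hyS, ⟨by linarith, le_of_lt habs2⟩⟩
  obtain ⟨y, hy⟩ := IsCompact.nonempty_iInter_of_sequence_nonempty_isCompact_isClosed
    F hFsub hFne
    (isCompact_Icc.of_isClosed_subset (hFclosed 0) (fun x hx => hx.1.1))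
    hFclosed
  simp only [Set.mem_iInter] at hy
  have hyIcc : y ∈ Set.Icc a b := (hy 0).1.1
  -- |y - z| = ε
  have hval : |y - z| = ε := by
    have hle : |y - z| ≤ ε := (hy 0).2.2
    have hge : ε ≤ |y - z| := by
      by_contra h
      push_neg at h
      obtain ⟨k, hk⟩ := exists_nat_one_div_lt (show 0 < ε - |y - z| by linarith)
      have := (hy k).2.1
      linarith
    linarith
  -- y ∈ survivorSet at ε
  have hyS : y ∈ survivorSet f (Set.Icc a b) z ε := by
    refine ⟨hyIcc, fun n hn => ?_⟩
    have hlt : |f^[n] y - z| < ε := by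
      rw [abs_lt]
      have h1 := hn.1; have h2 := hn.2
      constructor <;> linarith
    obtain ⟨k, hk⟩ := exists_nat_one_div_lt (show 0 < ε - |f^[n] y - z| by linarith)
    have habs := abs_lt.mp (show |f^[n] y - z| < ε - 1 / (k + 1) by linarith)
    exact (hy k).1.2 n ⟨by linarith [habs.1], by linarith [habs.2]⟩
  -- but y = z ± ε, contradicting hbd
  have : y ∈ survivorSet f (Set.Icc a b) z ε ∩ ({z - ε, z + ε} : Set ℝ) := by
    refine ⟨hyS, ?_⟩
    simp only [Set.mem_insert_iff, Set.mem_singleton_iff]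
    rcases abs_eq (le_of_lt hε) |>.mp hval with h | h
    · right; linarith
    · left; linarith
  rw [hbd] at this
  exact this

end SurvivorAux

theorem survivor_locally_constant (a b : ℝ) (hab : a ≤ b) (f : ℝ → ℝ)
    (hf : Continuous f) (hmaps : Set.MapsTo f (Set.Icc a b) (Set.Icc a b))
    (μ : Measure ℝ) [IsProbabilityMeasure μ] (herg : Ergodic f μ)
    (z : ℝ) (hz : z ∈ Set.Icc a b)
    (hμH : ∀ ε > 0, 0 < μ (Set.Ioo (z - ε) (z + ε)))
    (ε : ℝ) (hε : 0 < ε)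
    (hbd : survivorSet f (Set.Icc a b) z ε ∩ {z - ε, z + ε} = ∅) :
    ∃ δ > 0, ∀ ε', ε - δ < ε' → ε' < ε + δ →
      survivorSet f (Set.Icc a b) z ε' = survivorSet f (Set.Icc a b) z ε := by
  obtain ⟨δ₁, hδ₁, hA⟩ := SurvivorAux.lemA hf hmaps hε hbd
  obtain ⟨δ₂, hδ₂, hB⟩ := SurvivorAux.lemB hf hmaps hε hbd
  refine ⟨min δ₁ δ₂, lt_min hδ₁ hδ₂, fun ε' h1 h2 => ?_⟩
  rcases le_or_gt ε' ε with hle | hlt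
  · apply Set.Subset.antisymm
    · exact hB ε' (by have := min_le_right δ₁ δ₂; linarith) hle
    · exact SurvivorAux.mono hle
  · apply Set.Subset.antisymm
    · exact SurvivorAux.mono (le_of_lt hlt)
    · intro x hx
      refine ⟨hx.1, fun n hn => ?_⟩
      have h3 := hA x hx n
      have h4 : |f^[n] x - z| < ε' := by
        rw [abs_lt]
        have := hn.1; have := hn.2
        constructor <;> linarith
      have := min_le_left δ₁ δ₂
      linarith
end

section
/- Let λ_ε ∈ (0,1) be the eigenvalue of a punctured transfer operator, Λ_ε the eigenvalue of the induced punctured operator, ν̂_ε an invariant probability measure for the induced open map that is an equilibrium state with pressure relation log Λ_ε = (∫ R_ε dν̂_ε) log λ_ε. If ∫ R_ε dν̂_ε ∈ [1, M] for all small ε and (1-Λ_ε)/μ̂_{Y,ε}(Ĥ'_ε) → 1, ∫R_ε dμ̂_{Y,ε} / ∫R_ε dν̂_ε → 1, and μ̂_ε(Ĥ'_ε)/μ̂_ε(Ĥ_ε) → c as ε → 0, then -log λ_ε / μ̂_ε(Ĥ_ε) → c. -/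
open Filter Topology

theorem escape_rate_factorization
    (lam Lam Rν Rμ mH mH' mYH' : ℝ → ℝ) (c M : ℝ)
    (h1 : ∀ ε > 0, 0 < lam ε ∧ lam ε < 1)
    (h2 : ∀ ε > 0, 0 < Lam ε ∧ Lam ε < 1)
    (h3 : ∀ ε > 0, Real.log (Lam ε) = Rν ε * Real.log (lam ε))
    (h4 : ∀ ε > 0, mH' ε = mYH' ε / Rμ ε)
    (h5 : ∀ ε > 0, 1 ≤ Rν ε ∧ Rν ε ≤ M)
    (hpos : ∀ ε > 0, 0 < mH ε ∧ 0 < mYH' ε ∧ 0 < Rμ ε)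
    (hLam1 : Tendsto Lam (𝓝[>] (0:ℝ)) (𝓝 1))
    (hA : Tendsto (fun ε => (1 - Lam ε) / mYH' ε) (𝓝[>] (0:ℝ)) (𝓝 1))
    (hB : Tendsto (fun ε => Rμ ε / Rν ε) (𝓝[>] (0:ℝ)) (𝓝 1))
    (hC : Tendsto (fun ε => mH' ε / mH ε) (𝓝[>] (0:ℝ)) (𝓝 c)) :
    Tendsto (fun ε => -Real.log (lam ε) / mH ε) (𝓝[>] (0:ℝ)) (𝓝 c) := by
  -- Step 1: log(Lam ε)/(Lam ε - 1) → 1 (slope of log at 1)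
  have hslope : Tendsto (fun x : ℝ => Real.log x / (x - 1)) (𝓝[≠] (1:ℝ)) (𝓝 1) := by
    have h := (Real.hasDerivAt_log one_ne_zero)
    rw [hasDerivAt_iff_tendsto_slope] at h
    norm_num at h
    refine h.congr ?_
    intro x
    simp [slope_def_field, div_eq_div_iff_comm]
  have hLamne : Tendsto Lam (𝓝[>] (0:ℝ)) (𝓝[≠] (1:ℝ)) := by
    rw [tendsto_nhdsWithin_iff]
    refine ⟨hLam1, ?_⟩
    filter_upwards [self_mem_nhdsWithin] with ε hε
    exact ne_of_lt (h2 ε hε).2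
  have hD : Tendsto (fun ε => Real.log (Lam ε) / (Lam ε - 1)) (𝓝[>] (0:ℝ)) (𝓝 1) :=
    hslope.comp hLamne
  -- Step 2: product
  have hprod : Tendsto (fun ε =>
      (Real.log (Lam ε) / (Lam ε - 1)) * ((1 - Lam ε) / mYH' ε) *
        (Rμ ε / Rν ε) * (mH' ε / mH ε)) (𝓝[>] (0:ℝ)) (𝓝 c) := by
    have := ((hD.mul hA).mul hB).mul hC
    simpa using this
  refine hprod.congr' ?_
  filter_upwards [self_mem_nhdsWithin] with ε hε
  obtain ⟨hmH, hmYH', hRμ⟩ := hpos ε hε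
  obtain ⟨hRν1, _⟩ := h5 ε hε
  have hRν : (0:ℝ) < Rν ε := lt_of_lt_of_le one_pos hRν1
  have hLamlt := (h2 ε hε).2
  have hne : Lam ε - 1 ≠ 0 := sub_ne_zero.2 (ne_of_lt hLamlt)
  have hmH'eq := h4 ε hε
  have hlog := h3 ε hε
  rw [hmH'eq, hlog]
  field_simp
  ring
end

section
/- Let f : I → I be locally eventually onto (for every open U ⊂ I there is n with f^n(U) = I), let π : Î → I be a semiconjugacy (π ∘ f̂ = f ∘ π) with the property that for any two open sets O_1, O_2 ⊂ Î with π(O_1) ∩ π(O_2) ≠ ∅ there is n with f̂^n(O_1) ∩ f̂^n(O_2) ≠ ∅. Then for any two open sets Q_1, Q_2 ⊂ Î there exist n_1, n_2 with f̂^{n_1+n_2}(Q_1) ∩ f̂^{n_2}(Q_2) ≠ ∅. -/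
theorem hofbauer_transitivity {X X' : Type*} [TopologicalSpace X] [TopologicalSpace X']
    (f : X → X) (fh : X' → X') (π : X' → X)
    (hleo : ∀ U : Set X, IsOpen U → U.Nonempty → ∃ n : ℕ, f^[n] '' U = Set.univ)
    (hsemi : π ∘ fh = f ∘ π)
    (hπopen : IsOpenMap π) (hfhopen : IsOpenMap fh)
    (hfibre : ∀ O₁ O₂ : Set X', IsOpen O₁ → IsOpen O₂ →
      (π '' O₁ ∩ π '' O₂).Nonempty → ∃ n : ℕ, (fh^[n] '' O₁ ∩ fh^[n] '' O₂).Nonempty) :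
    ∀ Q₁ Q₂ : Set X', IsOpen Q₁ → IsOpen Q₂ → Q₁.Nonempty → Q₂.Nonempty →
      ∃ n₁ n₂ : ℕ, (fh^[n₁ + n₂] '' Q₁ ∩ fh^[n₂] '' Q₂).Nonempty := by
  intro Q₁ Q₂ hQ₁ hQ₂ hne₁ hne₂
  have hsemi' : ∀ n : ℕ, π ∘ fh^[n] = f^[n] ∘ π := by
    intro n
    induction n with
    | zero => rfl
    | succ n ih =>
      rw [Function.iterate_succ', Function.iterate_succ', ← Function.comp_assoc,
        hsemi, Function.comp_assoc, ih, Function.comp_assoc]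
  have hopen : ∀ n : ℕ, IsOpen (fh^[n] '' Q₁) := by
    intro n
    induction n with
    | zero => simpa
    | succ m ih => rw [Function.iterate_succ', Set.image_comp]; exact hfhopen _ ih
  obtain ⟨n₁, hn₁⟩ := hleo (π '' Q₁) (hπopen _ hQ₁) (hne₁.image π)
  have hcover : π '' (fh^[n₁] '' Q₁) = Set.univ := by
    rw [← Set.image_comp, hsemi' n₁, Set.image_comp, hn₁]
  obtain ⟨y, hy⟩ := hne₂
  have hmeets : (π '' (fh^[n₁] '' Q₁) ∩ π '' Q₂).Nonempty := by
    refine ⟨π y, ?_, ⟨y, hy, rfl⟩⟩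
    rw [hcover]; trivial
  obtain ⟨n₂, hn₂⟩ := hfibre _ _ (hopen n₁) hQ₂ hmeets
  refine ⟨n₁, n₂, ?_⟩
  rwa [← Set.image_comp, ← Function.iterate_add, Nat.add_comm] at hn₂
end

section
/- Let L be a transfer operator with conformal measure m, g ≥ 0 with Lg = g and m(g) = 1, and suppose there is an open set U with inf_U g > 0 and n ∈ ℕ with f^n(U) = I and inf{e^{S_nφ(y)} : y ∈ U} > 0. Then inf_I g > 0. -/
theorem density_bounded_below {X : Type*} [TopologicalSpace X]
    (f : X → X) (φ : X → ℝ) (g : X → ℝ) (hg0 : ∀ x, 0 ≤ g x)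
    (hsum : ∀ (n : ℕ) (x : X),
      Summable (fun y : {y : X // f^[n] y = x} =>
        g y * Real.exp (∑ i ∈ Finset.range n, φ (f^[i] (y : X)))))
    (hfix : ∀ (n : ℕ) (x : X),
      g x = ∑' y : {y : X // f^[n] y = x},
        g y * Real.exp (∑ i ∈ Finset.range n, φ (f^[i] (y : X))))
    (U : Set X) (hU : IsOpen U)
    (hgU : ∃ c > 0, ∀ x ∈ U, c ≤ g x)
    (n : ℕ) (honto : f^[n] '' U = Set.univ)
    (hφU : ∃ c' > 0, ∀ y ∈ U, c' ≤ Real.exp (∑ i ∈ Finset.range n, φ (f^[i] y))) :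
    ∃ c > 0, ∀ x, c ≤ g x := by
  obtain ⟨c, hc, hcg⟩ := hgU
  obtain ⟨c', hc', hc'φ⟩ := hφU
  refine ⟨c * c', mul_pos hc hc', fun x => ?_⟩
  have hx : x ∈ f^[n] '' U := honto ▸ Set.mem_univ x
  obtain ⟨y, hyU, hyx⟩ := hx
  have key : c * c' ≤ g y * Real.exp (∑ i ∈ Finset.range n, φ (f^[i] y)) :=
    mul_le_mul (hcg y hyU) (hc'φ y hyU) hc'.le (hg0 y)
  calc c * c' ≤ g y * Real.exp (∑ i ∈ Finset.range n, φ (f^[i] y)) := key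
    _ ≤ ∑' z : {z : X // f^[n] z = x},
        g z * Real.exp (∑ i ∈ Finset.range n, φ (f^[i] (z : X))) :=
      Summable.le_tsum (hsum n x) ⟨y, hyx⟩ (fun z _ =>
        mul_nonneg (hg0 z) (Real.exp_pos _).le)
    _ = g x := (hfix n x).symm
end
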